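/- Let F be a field with char F ≠ 2 and let I be an infinite set. Then for every derivation d of the Lie algebra sl_∞(I,F) there exists a matrix y ∈ M_rcf(I,F) such that d(a) = ya − ay for all a ∈ sl_∞(I,F). -/

import Mathlib

/-- The product of two `I × I` matrices, defined via `finsum`; it is well defined
whenever one factor is finitary or both are row-and-column-finite. -/
noncomputable def matMul {F I : Type*} [Field F] (a b : Matrix I I F) : Matrix I I F :=
  fun i j => ∑ᶠ k, a i k * b k j

/-- A finitary matrix: only finitely many nonzero entries. -/
def IsFinitary {F I : Type*} [Field F] (a : Matrix I I F) : Prop :=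
  {p : I × I | a p.1 p.2 ≠ 0}.Finite

/-- A matrix has finitely many nonzero entries in each row and in each column. -/
def IsRcf {F I : Type*} [Field F] (a : Matrix I I F) : Prop :=
  (∀ i, {j | a i j ≠ 0}.Finite) ∧ (∀ j, {i | a i j ≠ 0}.Finite)

/-- Membership in `sl_∞(I,F)`: a finitary matrix of trace zero (the trace being the
finite sum of diagonal entries). -/
def IsSl {F I : Type*} [Field F] (a : Matrix I I F) : Prop :=
  IsFinitary a ∧ (∑ᶠ i, a i i) = 0

open Function

section Stmt9Aux
open scoped Classical
variable {F I : Type*} [Field F]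

/-- elementary matrix -/
noncomputable def sbm (i j : I) : Matrix I I F := fun p q => if p = i ∧ q = j then 1 else 0

lemma sbm_apply (i j p q : I) : (sbm i j : Matrix I I F) p q = if p = i ∧ q = j then 1 else 0 := rfl

lemma matMul_sbm (a : Matrix I I F) (i j p q : I) :
    matMul a (sbm i j) p q = if q = j then a p i else 0 := by
  unfold matMul
  rw [finsum_eq_single _ i (fun x hx => by simp [sbm_apply, hx])]
  simp [sbm_apply, mul_ite]

lemma sbm_matMul (a : Matrix I I F) (i j p q : I) :
    matMul (sbm i j) a p q = if p = i then a j q else 0 := by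
  unfold matMul
  rw [finsum_eq_single _ j (fun x hx => by simp [sbm_apply, hx])]
  simp [sbm_apply, ite_mul]

lemma matMul_sbm_sbm (i k j : I) : matMul (sbm i k) (sbm k j) = (sbm i j : Matrix I I F) := by
  funext p q
  simp [matMul_sbm, sbm_apply]
  split_ifs with h1 h2 h2 <;> simp_all

lemma matMul_sbm_sbm_zero {b c : I} (a d : I) (h : b ≠ c) :
    matMul (sbm a b) (sbm c d) = (0 : Matrix I I F) := by
  funext p q
  show matMul (sbm a b) (sbm c d) p q = 0
  rw [matMul_sbm, sbm_apply]
  split_ifs with h1 h2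
  · exact absurd h2.2.symm h
  · rfl
  · rfl

lemma finitary_sbm (i j : I) : IsFinitary (sbm i j : Matrix I I F) := by
  apply Set.Finite.subset (Set.finite_singleton ((i, j) : I × I))
  intro p hp
  simp only [Set.mem_setOf_eq, sbm_apply] at hp
  by_cases h : p.1 = i ∧ p.2 = j
  · simp [Set.mem_singleton_iff, Prod.ext_iff, h.1, h.2]
  · simp [h] at hp

lemma diagFinite {m : Matrix I I F} (h : IsFinitary m) :
    (Function.support fun i => m i i).Finite := by
  have hinj : Function.Injective (fun i : I => ((i, i) : I × I)) :=
    fun a b hab => congrArg Prod.fst hab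
  have := (h.preimage (f := fun i : I => ((i,i) : I × I)) hinj.injOn)
  apply this.subset
  intro i hi
  simpa using hi

lemma sl_sbm {i j : I} (h : i ≠ j) : IsSl (sbm i j : Matrix I I F) := by
  refine ⟨finitary_sbm i j, ?_⟩
  have : ∀ m : I, (sbm i j : Matrix I I F) m m = 0 := by
    intro m
    simp only [sbm_apply]
    split_ifs with hm
    · exact absurd (hm.1.symm.trans hm.2) h
    · rfl
  simp [this]

lemma IsFinitary.addF {a b : Matrix I I F} (ha : IsFinitary a) (hb : IsFinitary b) :
    IsFinitary (a + b) := by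
  apply (ha.union hb).subset
  intro p hp
  simp only [Set.mem_setOf_eq, Matrix.add_apply] at hp
  by_contra hc
  simp only [Set.mem_union, Set.mem_setOf_eq, not_or, not_not] at hc
  simp [hc.1, hc.2] at hp

lemma IsFinitary.subF {a b : Matrix I I F} (ha : IsFinitary a) (hb : IsFinitary b) :
    IsFinitary (a - b) := by
  apply (ha.union hb).subset
  intro p hp
  simp only [Set.mem_setOf_eq, Matrix.sub_apply] at hp
  by_contra hc
  simp only [Set.mem_union, Set.mem_setOf_eq, not_or, not_not] at hc
  simp [hc.1, hc.2] at hp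

lemma IsFinitary.smulF {a : Matrix I I F} (c : F) (ha : IsFinitary a) :
    IsFinitary (c • a) := by
  apply ha.subset
  intro p hp
  simp only [Set.mem_setOf_eq, Matrix.smul_apply, smul_eq_mul] at hp ⊢
  exact fun h => hp (by simp [h])

lemma IsSl.addS {a b : Matrix I I F} (ha : IsSl a) (hb : IsSl b) : IsSl (a + b) := by
  refine ⟨ha.1.addF hb.1, ?_⟩
  have : ∑ᶠ i, (a + b) i i = ∑ᶠ i, (a i i + b i i) := by simp [Matrix.add_apply]
  rw [this, finsum_add_distrib (diagFinite ha.1) (diagFinite hb.1), ha.2, hb.2, add_zero]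

lemma IsSl.smulS {a : Matrix I I F} (c : F) (ha : IsSl a) : IsSl (c • a) := by
  refine ⟨ha.1.smulF c, ?_⟩
  have : ∑ᶠ i, (c • a) i i = ∑ᶠ i, c * a i i := by simp [Matrix.smul_apply]
  rw [this, ← mul_finsum _ _, ha.2, mul_zero]

lemma isSl_zero : IsSl (0 : Matrix I I F) := by
  refine ⟨Set.Finite.subset (Set.finite_empty) (by simp), by simp⟩

lemma sl_sbm_diag {p q : I} (h : p ≠ q) : IsSl ((sbm p p - sbm q q) : Matrix I I F) := by
  refine ⟨(finitary_sbm p p).subF (finitary_sbm q q), ?_⟩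
  have hsub : (Function.support fun i => ((sbm p p - sbm q q) : Matrix I I F) i i) ⊆ ↑({p, q} : Finset I) := by
    intro i hi
    simp only [Function.mem_support, Matrix.sub_apply, sbm_apply] at hi
    by_contra hc
    simp only [Finset.coe_insert, Finset.coe_singleton, Set.mem_insert_iff,
      Set.mem_singleton_iff, not_or] at hc
    simp [hc.1, hc.2] at hi
  rw [finsum_eq_finset_sum_of_support_subset _ hsub]
  rw [Finset.sum_pair h]
  simp [Matrix.sub_apply, sbm_apply, h, h.symm]

lemma supp_mul_left (y a : Matrix I I F) (p q : I) (hy : {k | y p k ≠ 0}.Finite) :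
    (Function.support fun k => y p k * a k q).Finite := by
  apply hy.subset
  intro k hk
  simp only [Function.mem_support] at hk
  simp only [Set.mem_setOf_eq]
  intro h
  exact hk (by simp [h])

lemma supp_mul_right (a y : Matrix I I F) (p q : I) (hy : {k | y k q ≠ 0}.Finite) :
    (Function.support fun k => a p k * y k q).Finite := by
  apply hy.subset
  intro k hk
  simp only [Function.mem_support] at hk
  simp only [Set.mem_setOf_eq]
  intro h
  exact hk (by simp [h])

lemma matMul_right_add (y a b : Matrix I I F) (hy : ∀ p, {k | y p k ≠ 0}.Finite) :
    matMul y (a + b) = matMul y a + matMul y b := by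
  funext p q
  show (∑ᶠ k, y p k * (a + b) k q) = (∑ᶠ k, y p k * a k q) + (∑ᶠ k, y p k * b k q)
  have hcg : ∀ k, y p k * (a + b) k q = y p k * a k q + y p k * b k q := by
    intro k; simp [Matrix.add_apply, mul_add]
  rw [finsum_congr hcg,
    finsum_add_distrib (supp_mul_left y a p q (hy p)) (supp_mul_left y b p q (hy p))]

lemma matMul_left_add (y a b : Matrix I I F) (hy : ∀ q, {k | y k q ≠ 0}.Finite) :
    matMul (a + b) y = matMul a y + matMul b y := by
  funext p q
  show (∑ᶠ k, (a + b) p k * y k q) = (∑ᶠ k, a p k * y k q) + (∑ᶠ k, b p k * y k q)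
  have hcg : ∀ k, (a + b) p k * y k q = a p k * y k q + b p k * y k q := by
    intro k; simp [Matrix.add_apply, add_mul]
  rw [finsum_congr hcg,
    finsum_add_distrib (supp_mul_right a y p q (hy q)) (supp_mul_right b y p q (hy q))]

lemma matMul_right_smul (y a : Matrix I I F) (c : F) (hy : ∀ p, {k | y p k ≠ 0}.Finite) :
    matMul y (c • a) = c • matMul y a := by
  funext p q
  show (∑ᶠ k, y p k * (c • a) k q) = c * ∑ᶠ k, y p k * a k q
  rw [mul_finsum _ _]
  apply finsum_congr
  intro k
  show y p k * (c * a k q) = c * (y p k * a k q)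
  ring

lemma matMul_left_smul (y a : Matrix I I F) (c : F) (hy : ∀ q, {k | y k q ≠ 0}.Finite) :
    matMul (c • a) y = c • matMul a y := by
  funext p q
  show (∑ᶠ k, (c • a) p k * y k q) = c * ∑ᶠ k, a p k * y k q
  rw [mul_finsum _ _]
  apply finsum_congr
  intro k
  show (c * a p k) * y k q = c * (a p k * y k q)
  ring

lemma matMul_zero_right (y : Matrix I I F) : matMul y (0 : Matrix I I F) = 0 := by
  funext p q; show (∑ᶠ k, y p k * (0 : Matrix I I F) k q) = 0; simp

lemma matMul_zero_left (y : Matrix I I F) : matMul (0 : Matrix I I F) y = 0 := by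
  funext p q; show (∑ᶠ k, (0 : Matrix I I F) p k * y k q) = 0; simp


lemma matMul_right_sub (y a b : Matrix I I F) (hy : ∀ p, {k | y p k ≠ 0}.Finite) :
    matMul y (a - b) = matMul y a - matMul y b := by
  funext p q
  show (∑ᶠ k, y p k * (a - b) k q) = (∑ᶠ k, y p k * a k q) - (∑ᶠ k, y p k * b k q)
  have hcg : ∀ k, y p k * (a - b) k q = y p k * a k q - y p k * b k q := by
    intro k; simp [Matrix.sub_apply, mul_sub]
  rw [finsum_congr hcg,
    finsum_sub_distrib (supp_mul_left y a p q (hy p)) (supp_mul_left y b p q (hy p))]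

lemma matMul_left_sub (y a b : Matrix I I F) (hy : ∀ q, {k | y k q ≠ 0}.Finite) :
    matMul (a - b) y = matMul a y - matMul b y := by
  funext p q
  show (∑ᶠ k, (a - b) p k * y k q) = (∑ᶠ k, a p k * y k q) - (∑ᶠ k, b p k * y k q)
  have hcg : ∀ k, (a - b) p k * y k q = a p k * y k q - b p k * y k q := by
    intro k; simp [Matrix.sub_apply, sub_mul]
  rw [finsum_congr hcg,
    finsum_sub_distrib (supp_mul_right a y p q (hy q)) (supp_mul_right b y p q (hy q))]

section Deriv
variable (d : Matrix I I F → Matrix I I F)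
variable (hbracket : ∀ a b : Matrix I I F, IsSl a → IsSl b →
      d (matMul a b - matMul b a) =
        (matMul (d a) b - matMul b (d a)) + (matMul a (d b) - matMul (d b) a))

include hbracket

/-- Master identity: `E i j = [E i k, E k j]`, expressed entrywise. -/
lemma MI {i j k : I} (hij : i ≠ j) (hik : i ≠ k) (hkj : k ≠ j) (p q : I) :
    d (sbm i j) p q =
      ((if q = j then d (sbm i k) p k else 0) - (if p = k then d (sbm i k) j q else 0)) +
      ((if p = i then d (sbm k j) k q else 0) - (if q = k then d (sbm k j) p i else 0)) := by
  have h := hbracket (sbm i k) (sbm k j) (sl_sbm hik) (sl_sbm hkj)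
  rw [matMul_sbm_sbm i k j, matMul_sbm_sbm_zero k k (Ne.symm hij), sub_zero] at h
  have h2 := congrFun (congrFun h p) q
  simpa only [Matrix.add_apply, Matrix.sub_apply, matMul_sbm, sbm_matMul] using h2

/-- Disjoint commuting relation consequence. -/
lemma C1 (hd0 : d 0 = 0) {k j q r : I} (hkj : k ≠ j) (hqr : q ≠ r) (hjq : j ≠ q)
    (hrk : r ≠ k) (hrj : r ≠ j) (hkq : k ≠ q) :
    d (sbm k j) k q = - d (sbm q r) j r := by
  have h := hbracket (sbm k j) (sbm q r) (sl_sbm hkj) (sl_sbm hqr)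
  rw [matMul_sbm_sbm_zero k r hjq, matMul_sbm_sbm_zero q j hrk, sub_self, hd0] at h
  have h2 := congrFun (congrFun h.symm k) r
  simp only [Matrix.add_apply, Matrix.sub_apply, matMul_sbm, sbm_matMul, Matrix.zero_apply,
    if_pos rfl, if_neg hkq, if_neg hrj] at h2
  simp only [if_true] at h2
  linear_combination h2

/-- Independence of auxiliary column choice. -/
lemma Wind {i p j j' : I} (hpi : p ≠ i) (hji : j ≠ i) (hjp : j ≠ p)
    (hj'i : j' ≠ i) (hj'p : j' ≠ p) :
    d (sbm i j) p j = d (sbm i j') p j' := by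
  by_cases hjj' : j = j'
  · subst hjj'; rfl
  · have h := MI d hbracket (Ne.symm hji) (Ne.symm hj'i)
      (show j' ≠ j from fun hc => hjj' hc.symm) p j
    simpa only [if_pos rfl, if_neg (show p ≠ j' from fun hc => hj'p hc.symm),
      if_neg hpi, if_neg hjj', if_true, sub_zero, zero_sub, add_zero, neg_zero] using h

end Deriv

end Stmt9Aux

/-- For `char F ≠ 2` and `I` infinite, every derivation `d` of the Lie
algebra `sl_∞(I,F)` is of the form `d(a) = y*a - a*y` for some `y ∈ M_rcf(I,F)`. -/
theorem stmt_9 (F I : Type*) [Field F] [Infinite I] (hchar : ringChar F ≠ 2)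
    (d : Matrix I I F → Matrix I I F)
    (hmap : ∀ a, IsSl a → IsSl (d a))
    (hadd : ∀ a b, IsSl a → IsSl b → d (a + b) = d a + d b)
    (hsmul : ∀ (c : F) (a), IsSl a → d (c • a) = c • d a)
    (hbracket : ∀ a b, IsSl a → IsSl b →
      d (matMul a b - matMul b a) =
        (matMul (d a) b - matMul b (d a)) + (matMul a (d b) - matMul (d b) a)) :
    ∃ y : Matrix I I F, IsRcf y ∧
      ∀ a, IsSl a → d a = matMul y a - matMul a y := by
  classical
  have hd0 : d 0 = 0 := by
    have h := hsmul 0 0 isSl_zero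
    rw [zero_smul, zero_smul] at h
    exact h
  obtain ⟨i0⟩ : Nonempty I := inferInstance
  have hex2 : ∀ p q : I, ∃ k : I, k ≠ p ∧ k ≠ q := by
    intro p q
    obtain ⟨k, hk⟩ := Infinite.exists_notMem_finset ({p, q} : Finset I)
    simp only [Finset.mem_insert, Finset.mem_singleton, not_or] at hk
    exact ⟨k, hk.1, hk.2⟩
  have hex3 : ∀ p q s : I, ∃ k : I, k ≠ p ∧ k ≠ q ∧ k ≠ s := by
    intro p q s
    obtain ⟨k, hk⟩ := Infinite.exists_notMem_finset ({p, q, s} : Finset I)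
    simp only [Finset.mem_insert, Finset.mem_singleton, not_or] at hk
    exact ⟨k, hk.1, hk.2.1, hk.2.2⟩
  have hex4 : ∀ p q s t : I, ∃ k : I, k ≠ p ∧ k ≠ q ∧ k ≠ s ∧ k ≠ t := by
    intro p q s t
    obtain ⟨k, hk⟩ := Infinite.exists_notMem_finset ({p, q, s, t} : Finset I)
    simp only [Finset.mem_insert, Finset.mem_singleton, not_or] at hk
    exact ⟨k, hk.1, hk.2.1, hk.2.2.1, hk.2.2.2⟩
  choose r hr1 hr2 using hex2
  set Y : Matrix I I F := fun p q =>
    if p = q then (if p = i0 then 0 else d (sbm p i0) p i0)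
    else d (sbm q (r p q)) p (r p q) with hYset
  have hYapply : ∀ p q : I, Y p q =
      if p = q then (if p = i0 then 0 else d (sbm p i0) p i0)
      else d (sbm q (r p q)) p (r p q) := fun p q => rfl
  have hY00 : Y i0 i0 = 0 := by rw [hYapply]; simp
  have hYdiag : ∀ p : I, p ≠ i0 → Y p p = d (sbm p i0) p i0 := by
    intro p hp; rw [hYapply, if_pos rfl, if_neg hp]
  have hYoff : ∀ p q j : I, p ≠ q → j ≠ q → j ≠ p → Y p q = d (sbm q j) p j := by
    intro p q j hpq hjq hjp
    rw [hYapply, if_neg hpq]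
    exact Wind d hbracket hpq (hr2 p q) (hr1 p q) hjq hjp
  have hstar : ∀ i j k : I, i ≠ j → i ≠ k → k ≠ j →
      d (sbm i j) i j = d (sbm i k) i k + d (sbm k j) k j := by
    intro i j k hij hik hkj
    have h := MI d hbracket hij hik hkj i j
    simpa [hik, Ne.symm hkj] using h
  have hanti : ∀ i j : I, i ≠ j → d (sbm j i) j i = - d (sbm i j) i j := by
    intro i j hij
    obtain ⟨k, hki, hkj, -⟩ := hex3 i j j
    have e3 := hstar i k j (Ne.symm hki) hij (Ne.symm hkj)
    have e5 := hstar j k i (Ne.symm hkj) hij.symm (Ne.symm hki)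
    linear_combination -e3 - e5
  -- the entry formula
  have hF : ∀ i j : I, i ≠ j → ∀ p q : I,
      d (sbm i j) p q = (if q = j then Y p i else 0) - (if p = i then Y j q else 0) := by
    intro i j hij p q
    by_cases hp : p = i
    · by_cases hq : q = j
      · -- Case D
        subst hp; subst hq
        rw [if_pos rfl, if_pos rfl]
        by_cases hi : p = i0
        · have hq0 : q ≠ i0 := fun hc => hij (hi.trans hc.symm)
          have hYpp : Y p p = 0 := by rw [hi]; exact hY00
          rw [hYpp, hYdiag q hq0, hi]
          have h2 := hanti i0 q (fun hc : i0 = q => hij (hi.trans hc))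
          linear_combination h2
        · by_cases hj : q = i0
          · have hYqq : Y q q = 0 := by rw [hj]; exact hY00
            rw [hYdiag p hi, hYqq, hj]
            ring
          · rw [hYdiag p hi, hYdiag q hj]
            have h1 := hstar p q i0 hij hi (Ne.symm hj)
            have h2 := hanti q i0 hj
            linear_combination h1 + h2
      · -- Case C : p = i, q ≠ j
        subst hp
        rw [if_neg hq, if_pos rfl, zero_sub]
        obtain ⟨k, hki, hkj, hkq⟩ := hex3 p j q
        have h := MI d hbracket hij (Ne.symm hki) hkj p q
        have h' : d (sbm p j) p q = d (sbm k j) k q := by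
          simpa [hq, Ne.symm hki, Ne.symm hkq] using h
        obtain ⟨rr, hrj, hrq, hrk⟩ := hex3 j q k
        have hc := C1 d hbracket hd0 hkj (Ne.symm hrq)
          (show j ≠ q from fun hcc => hq hcc.symm) hrk hrj hkq
        have ho := hYoff j q rr (show j ≠ q from fun hcc => hq hcc.symm) hrq hrj
        rw [h', hc, ho]
    · by_cases hq : q = j
      · -- Case B
        subst hq
        rw [if_pos rfl, if_neg hp, sub_zero]
        obtain ⟨k, hki, hkj, hkp⟩ := hex3 i q p
        have h' : d (sbm i q) p q = d (sbm i k) p k := by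
          have h := MI d hbracket hij (Ne.symm hki) hkj p q
          simpa [Ne.symm hkp, hp, Ne.symm hkj] using h
        rw [h', hYoff p i k hp hki hkp]
      · -- Case A
        rw [if_neg hq, if_neg hp, sub_zero]
        obtain ⟨k, hki, hkj, hkp, hkq⟩ := hex4 i j p q
        have h := MI d hbracket hij (Ne.symm hki) hkj p q
        simpa [hq, hp, Ne.symm hkp, Ne.symm hkq] using h
  -- row/column finiteness helpers
  have hrowfin : ∀ m : Matrix I I F, IsFinitary m → ∀ k : I, {q | m k q ≠ 0}.Finite := by
    intro m hm k
    have hinj : Function.Injective (fun q : I => ((k, q) : I × I)) :=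
      fun a b hab => congrArg Prod.snd hab
    have hpre := hm.preimage (f := fun q : I => ((k, q) : I × I)) hinj.injOn
    exact hpre.subset (fun q hq => hq)
  have hcolfin : ∀ m : Matrix I I F, IsFinitary m → ∀ k : I, {p | m p k ≠ 0}.Finite := by
    intro m hm k
    have hinj : Function.Injective (fun p : I => ((p, k) : I × I)) :=
      fun a b hab => congrArg Prod.fst hab
    have hpre := hm.preimage (f := fun p : I => ((p, k) : I × I)) hinj.injOn
    exact hpre.subset (fun p hp => hp)
  have hYrcf : IsRcf Y := by
    constructor
    · intro p
      obtain ⟨k, hkp, -, -⟩ := hex3 p p p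
      have hfin := hrowfin _ (hmap _ (sl_sbm hkp)).1 k
      apply (hfin.union (Set.finite_singleton p)).subset
      intro q hq
      simp only [Set.mem_setOf_eq] at hq
      by_cases hqp : q = p
      · exact Or.inr hqp
      · left
        have h := hF k p hkp k q
        rw [if_neg hqp, if_pos rfl, zero_sub] at h
        show d (sbm k p) k q ≠ 0
        rw [h]
        exact neg_ne_zero.mpr hq
    · intro q
      obtain ⟨k, hkq, -, -⟩ := hex3 q q q
      have hfin := hcolfin _ (hmap _ (sl_sbm (Ne.symm hkq))).1 k
      apply (hfin.union (Set.finite_singleton q)).subset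
      intro p hp
      simp only [Set.mem_setOf_eq] at hp
      by_cases hpq : p = q
      · exact Or.inr hpq
      · left
        have h := hF q k (Ne.symm hkq) p k
        rw [if_pos rfl, if_neg hpq, sub_zero] at h
        show d (sbm q k) p k ≠ 0
        rw [h]
        exact hp
  refine ⟨Y, hYrcf, ?_⟩
  intro a ha
  set S : Finset (I × I) := ha.1.toFinset with hS
  set B : I × I → Matrix I I F :=
    fun x => if x.1 = x.2 then sbm x.1 x.1 - sbm i0 i0 else sbm x.1 x.2 with hBset
  have hBdef : ∀ x : I × I,
      B x = if x.1 = x.2 then sbm x.1 x.1 - sbm i0 i0 else sbm x.1 x.2 := fun x => rfl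
  have hBapp : ∀ (x : I × I) (u v : I), B x u v =
      (if u = x.1 ∧ v = x.2 then 1 else 0)
        - (if x.1 = x.2 ∧ u = i0 ∧ v = i0 then 1 else 0) := by
    intro x u v
    by_cases hx : x.1 = x.2
    · rw [hBdef x, if_pos hx, Matrix.sub_apply, sbm_apply, sbm_apply]
      simp [hx]
    · rw [hBdef x, if_neg hx, sbm_apply]
      simp [hx]
  have hBsl : ∀ x : I × I, IsSl (B x) := by
    intro x
    by_cases hx : x.1 = x.2
    · by_cases hxi : x.1 = i0
      · have hz : B x = 0 := by rw [hBdef x, if_pos hx, hxi]; exact sub_self _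
        rw [hz]; exact isSl_zero
      · rw [hBdef x, if_pos hx]; exact sl_sbm_diag hxi
    · rw [hBdef x, if_neg hx]; exact sl_sbm hx
  have hBlie : ∀ x : I × I, d (B x) = matMul Y (B x) - matMul (B x) Y := by
    intro x
    by_cases hx : x.1 = x.2
    · by_cases hxi : x.1 = i0
      · have hz : B x = 0 := by rw [hBdef x, if_pos hx, hxi]; exact sub_self _
        rw [hz, hd0, matMul_zero_right, matMul_zero_left, sub_self]
      · rw [hBdef x, if_pos hx]
        have key : (sbm x.1 x.1 - sbm i0 i0 : Matrix I I F)
            = matMul (sbm x.1 i0) (sbm i0 x.1) - matMul (sbm i0 x.1) (sbm x.1 i0) := by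
          rw [matMul_sbm_sbm x.1 i0 x.1, matMul_sbm_sbm i0 x.1 i0]
        have h := hbracket (sbm x.1 i0) (sbm i0 x.1) (sl_sbm hxi) (sl_sbm (Ne.symm hxi))
        rw [← key] at h
        rw [h, matMul_right_sub Y _ _ hYrcf.1, matMul_left_sub Y _ _ hYrcf.2]
        funext u v
        simp only [Matrix.add_apply, Matrix.sub_apply, matMul_sbm, sbm_matMul]
        rw [hF x.1 i0 hxi u i0, hF x.1 i0 hxi x.1 v,
          hF i0 x.1 (Ne.symm hxi) i0 v, hF i0 x.1 (Ne.symm hxi) u x.1, hY00]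
        split_ifs <;>
          first
            | ring1
            | (exfalso; apply absurd (rfl : x.1 = x.1); assumption)
            | (exfalso; apply absurd (rfl : i0 = i0); assumption)
            | (exfalso
               have h1 : u = x.1 := by assumption
               have h2 : u = i0 := by assumption
               exact hxi (h1.symm.trans h2))
            | (exfalso
               have h1 : v = x.1 := by assumption
               have h2 : v = i0 := by assumption
               exact hxi (h1.symm.trans h2))
    · rw [hBdef x, if_neg hx]
      funext u v
      simp only [Matrix.sub_apply, matMul_sbm, sbm_matMul]
      exact hF x.1 x.2 hx u v
  have hdsum : ∀ (s : Finset (I × I)) (f : I × I → Matrix I I F), (∀ x ∈ s, IsSl (f x)) →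
      IsSl (∑ x ∈ s, f x) ∧ d (∑ x ∈ s, f x) = ∑ x ∈ s, d (f x) := by
    intro s
    induction s using Finset.induction_on with
    | empty => intro f _; simp only [Finset.sum_empty]; exact ⟨isSl_zero, hd0⟩
    | insert _ _ hx ih =>
      intro f hf
      rw [Finset.sum_insert hx, Finset.sum_insert hx]
      have h1 := ih f (fun x hxs => hf x (Finset.mem_insert_of_mem hxs))
      have ha' := hf _ (Finset.mem_insert_self _ _)
      exact ⟨ha'.addS h1.1, by rw [hadd _ _ ha' h1.1, h1.2]⟩
  have hliesum : ∀ (s : Finset (I × I)) (f : I × I → Matrix I I F),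
      matMul Y (∑ x ∈ s, f x) - matMul (∑ x ∈ s, f x) Y
        = ∑ x ∈ s, (matMul Y (f x) - matMul (f x) Y) := by
    intro s f
    induction s using Finset.induction_on with
    | empty => simp only [Finset.sum_empty, matMul_zero_right, matMul_zero_left, sub_self]
    | insert _ _ hx ih =>
      rw [Finset.sum_insert hx, Finset.sum_insert hx,
        matMul_right_add Y _ _ hYrcf.1, matMul_left_add Y _ _ hYrcf.2, ← ih]
      abel
  have htr : (∑ x ∈ S, if x.1 = x.2 then a x.1 x.2 else 0) = 0 := by
    rw [← Finset.sum_filter]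
    have hinj : ∀ x ∈ S.filter (fun x : I × I => x.1 = x.2),
        ∀ y ∈ S.filter (fun x : I × I => x.1 = x.2), x.1 = y.1 → x = y := by
      intro x hxmem y hymem hxy
      have hx2 := (Finset.mem_filter.mp hxmem).2
      have hy2 := (Finset.mem_filter.mp hymem).2
      exact Prod.ext hxy (by rw [← hx2, ← hy2, hxy])
    have hsum := Finset.sum_image (f := fun i : I => a i i) hinj
    have hsupp : (Function.support fun i : I => a i i)
        ⊆ ↑((S.filter (fun x : I × I => x.1 = x.2)).image Prod.fst) := by
      intro i hi
      simp only [Function.mem_support] at hi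
      simp only [Finset.coe_image, Set.mem_image, Finset.mem_coe, Finset.mem_filter]
      exact ⟨(i, i), ⟨ha.1.mem_toFinset.mpr hi, rfl⟩, rfl⟩
    have h0 := ha.2
    rw [finsum_eq_finset_sum_of_support_subset _ hsupp, hsum] at h0
    calc ∑ x ∈ S.filter (fun x : I × I => x.1 = x.2), a x.1 x.2
        = ∑ x ∈ S.filter (fun x : I × I => x.1 = x.2), a x.1 x.1 :=
          Finset.sum_congr rfl (fun x hx => by rw [← (Finset.mem_filter.mp hx).2])
      _ = 0 := h0
  have hdecomp : a = ∑ x ∈ S, a x.1 x.2 • B x := by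
    funext u v
    rw [Matrix.sum_apply]
    have hterm : ∀ x : I × I, (a x.1 x.2 • B x) u v
        = (if x = (u, v) then a x.1 x.2 else 0)
          - (if u = i0 ∧ v = i0 then (if x.1 = x.2 then a x.1 x.2 else 0) else 0) := by
      intro x
      rw [Matrix.smul_apply, hBapp x u v, smul_eq_mul, mul_sub]
      congr 1
      · by_cases hx : u = x.1 ∧ v = x.2
        · rw [if_pos hx, mul_one, if_pos (Prod.ext hx.1.symm hx.2.symm)]
        · rw [if_neg hx, mul_zero,
            if_neg (fun hc : x = (u, v) => hx (by rw [hc]; exact ⟨rfl, rfl⟩))]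
      · by_cases h0 : u = i0 ∧ v = i0
        · rw [if_pos h0]
          by_cases hx : x.1 = x.2
          · rw [if_pos (⟨hx, h0.1, h0.2⟩ : x.1 = x.2 ∧ u = i0 ∧ v = i0), mul_one, if_pos hx]
          · rw [if_neg (fun hc : x.1 = x.2 ∧ u = i0 ∧ v = i0 => hx hc.1), mul_zero, if_neg hx]
        · rw [if_neg h0, if_neg (fun hc : x.1 = x.2 ∧ u = i0 ∧ v = i0 => h0 ⟨hc.2.1, hc.2.2⟩),
            mul_zero]
    rw [Finset.sum_congr rfl (fun x _ => hterm x), Finset.sum_sub_distrib,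
      Finset.sum_ite_eq' S ((u, v) : I × I) (fun x => a x.1 x.2)]
    have h2 : (∑ x ∈ S, if u = i0 ∧ v = i0 then (if x.1 = x.2 then a x.1 x.2 else 0) else 0)
        = 0 := by
      by_cases h0 : u = i0 ∧ v = i0
      · simp only [if_pos h0]; exact htr
      · simp only [if_neg h0, Finset.sum_const_zero]
    rw [h2, sub_zero]
    by_cases hm : ((u, v) : I × I) ∈ S
    · rw [if_pos hm]
    · rw [if_neg hm]
      by_contra hne
      exact hm (ha.1.mem_toFinset.mpr hne)
  have hslpieces : ∀ x ∈ S, IsSl (a x.1 x.2 • B x) :=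
    fun x _ => IsSl.smulS _ (hBsl x)
  have hmain := (hdsum S _ hslpieces).2
  calc d a = ∑ x ∈ S, d (a x.1 x.2 • B x) := by rw [← hmain, ← hdecomp]
    _ = ∑ x ∈ S, (matMul Y (a x.1 x.2 • B x) - matMul (a x.1 x.2 • B x) Y) := by
        refine Finset.sum_congr rfl (fun x _ => ?_)
        rw [hsmul _ _ (hBsl x), hBlie x, smul_sub,
          ← matMul_right_smul Y _ _ hYrcf.1, ← matMul_left_smul Y _ _ hYrcf.2]
    _ = matMul Y (∑ x ∈ S, a x.1 x.2 • B x) - matMul (∑ x ∈ S, a x.1 x.2 • B x) Y :=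
        (hliesum S _).symm
    _ = matMul Y a - matMul a Y := by rw [← hdecomp]
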